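/- The short bispecial factors of u^{(h)} (factors not containing 10) that are strong bispecial are exactly ε and 1^{l_h}; those that are weak bispecial are exactly 0^{m_h - 1} and 1^{n_h - 1}. -/

import Mathlib

/-- The `k`-th power of a finite word `w` (concatenation of `k` copies). -/
def wpow (w : List Bool) (k : ℕ) : List Bool := (List.replicate k w).flatten

/-- The pair of words `(u_i, v_i)`:  `u_0 = 0`, `v_0 = 1`,
`u_{i+1} = u_i^{m_i} v_i^{l_i}`, `v_{i+1} = u_i^{m_i} v_i^{n_i}`. -/
def uvSeq (l m n : ℕ → ℕ) : ℕ → List Bool × List Bool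
  | 0 => ([false], [true])
  | i + 1 =>
      (wpow (uvSeq l m n i).1 (m i) ++ wpow (uvSeq l m n i).2 (l i),
       wpow (uvSeq l m n i).1 (m i) ++ wpow (uvSeq l m n i).2 (n i))

/-- The substitution `σ_h` : `0 ↦ 0^{m_h} 1^{l_h}`, `1 ↦ 0^{m_h} 1^{n_h}`. -/
def subw (l m n : ℕ → ℕ) (h : ℕ) (w : List Bool) : List Bool :=
  w.flatMap fun c => List.replicate (m h) false ++ List.replicate (if c then n h else l h) true

/-- `wordIter i h = σ_h σ_{h+1} ⋯ σ_{h+i-1}(0)`. -/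
def wordIter (l m n : ℕ → ℕ) : ℕ → ℕ → List Bool
  | 0, _ => [false]
  | i + 1, h => subw l m n h (wordIter l m n i (h + 1))

/-- The infinite word `u^{(h)} = lim_i σ_h ⋯ σ_{h+i-1}(0)`. -/
def limWord (l m n : ℕ → ℕ) (h : ℕ) (k : ℕ) : Bool :=
  (wordIter l m n (k + 1) h).getD k false

/-- `w` is a factor of the infinite word `U`. -/
def IsFactor (U : ℕ → Bool) (w : List Bool) : Prop :=
  ∃ k, w = (List.range w.length).map fun j => U (k + j)

/-- `σ_0 σ_1 ⋯ σ_{h+i-1}` starting at `h`, applied to `w`. -/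
def subComp (l m n : ℕ → ℕ) : ℕ → ℕ → List Bool → List Bool
  | 0, _, w => w
  | i + 1, h, w => subw l m n h (subComp l m n i (h + 1) w)

/-- `\hat{σ}_h(w) = 1^{l_h} σ_h(w) 0^{m_h} 1^{l_h}`. -/
def hatw (l m n : ℕ → ℕ) (h : ℕ) (w : List Bool) : List Bool :=
  List.replicate (l h) true ++ subw l m n h w ++
    List.replicate (m h) false ++ List.replicate (l h) true

/-- `hatComp i h w = \hat{σ}_h ⋯ \hat{σ}_{h+i-1}(w)`. -/
def hatComp (l m n : ℕ → ℕ) : ℕ → ℕ → List Bool → List Bool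
  | 0, _, w => w
  | i + 1, h, w => hatw l m n h (hatComp l m n i (h + 1) w)

/-- The complexity function of the infinite word `U`. -/
noncomputable def complexityFn (U : ℕ → Bool) (nn : ℕ) : ℕ :=
  Set.ncard {w : List Bool | w.length = nn ∧ IsFactor U w}

/-- `v` is a strong bispecial factor of `U` : all four extensions `0v0, 0v1, 1v0, 1v1`
are factors. -/
def StrongBS (U : ℕ → Bool) (v : List Bool) : Prop :=
  IsFactor U (false :: v ++ [false]) ∧ IsFactor U (false :: v ++ [true]) ∧
    IsFactor U (true :: v ++ [false]) ∧ IsFactor U (true :: v ++ [true])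

/-- `v` is a weak bispecial factor of `U` : among the four extensions, exactly
`0v0` and `1v1`, or exactly `0v1` and `1v0`, are factors. -/
def WeakBS (U : ℕ → Bool) (v : List Bool) : Prop :=
  (IsFactor U (false :: v ++ [false]) ∧ IsFactor U (true :: v ++ [true]) ∧
      ¬ IsFactor U (false :: v ++ [true]) ∧ ¬ IsFactor U (true :: v ++ [false])) ∨
  (IsFactor U (false :: v ++ [true]) ∧ IsFactor U (true :: v ++ [false]) ∧
      ¬ IsFactor U (false :: v ++ [false]) ∧ ¬ IsFactor U (true :: v ++ [true]))


namespace Aux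
open List

/-- block of the substitution -/
def blk (l m n : ℕ → ℕ) (h : ℕ) (c : Bool) : List Bool :=
  List.replicate (m h) false ++ List.replicate (if c then n h else l h) true

variable {l m n : ℕ → ℕ} {h : ℕ}

lemma subw_nil : subw l m n h [] = [] := rfl

lemma subw_cons (c : Bool) (w : List Bool) :
    subw l m n h (c :: w) = blk l m n h c ++ subw l m n h w := by
  simp [subw, blk, List.flatMap_cons]

lemma subw_append (u v : List Bool) :
    subw l m n h (u ++ v) = subw l m n h u ++ subw l m n h v := by
  simp [subw, List.flatMap_append]

lemma subw_infix {u v : List Bool} (huv : u <:+: v) :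
    subw l m n h u <:+: subw l m n h v := by
  obtain ⟨s, t, e⟩ := huv
  exact ⟨subw l m n h s, subw l m n h t, by rw [← subw_append, ← subw_append, e]⟩

lemma subw_prefix {u v : List Bool} (huv : u <+: v) :
    subw l m n h u <+: subw l m n h v := by
  obtain ⟨t, e⟩ := huv
  exact ⟨subw l m n h t, by rw [← subw_append, e]⟩

lemma length_subw_ge (w : List Bool) (hm : 2 ≤ m h) :
    2 * w.length ≤ (subw l m n h w).length := by
  induction w with
  | nil => simp [subw_nil]
  | cons c w ih =>
    rw [subw_cons]
    simp only [List.length_append, List.length_cons]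
    have : 2 ≤ (blk l m n h c).length := by
      simp [blk]
      cases c <;> simp <;> omega
    omega

end Aux

namespace Aux
open List
variable {l m n : ℕ → ℕ}

lemma wordIter_length (hm : ∀ i, 2 ≤ m i) : ∀ (i h : ℕ), i < (wordIter l m n i h).length := by
  intro i
  induction i with
  | zero => intro h; simp [wordIter]
  | succ i ih =>
    intro h
    show i + 1 < (subw l m n h (wordIter l m n i (h+1))).length
    have h1 := length_subw_ge (l := l) (n := n) (wordIter l m n i (h+1)) (hm h)
    have h2 := ih (h+1)
    omega

lemma wordIter_prefix_succ (hm : ∀ i, 1 ≤ m i) : ∀ (i h : ℕ),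
    wordIter l m n i h <+: wordIter l m n (i+1) h := by
  intro i
  induction i with
  | zero =>
    intro h
    show [false] <+: subw l m n h [false]
    rw [subw_cons, subw_nil, List.append_nil]
    refine List.IsPrefix.trans ?_ (List.prefix_append _ _)
    have := hm h
    exact ⟨List.replicate (m h - 1) false, by
      rw [List.singleton_append, ← List.replicate_succ]; congr 1; omega⟩
  | succ i ih =>
    intro h
    exact subw_prefix (ih (h+1))

lemma wordIter_prefix_le (hm : ∀ i, 1 ≤ m i) {i j : ℕ} (hij : i ≤ j) (h : ℕ) :
    wordIter l m n i h <+: wordIter l m n j h := by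
  induction j with
  | zero => rw [Nat.le_zero.mp hij]
  | succ j ih =>
    rcases Nat.lt_or_ge i (j+1) with hc | hc
    · exact (ih (by omega)).trans (wordIter_prefix_succ hm j h)
    · have : i = j + 1 := by omega
      subst this; rfl

lemma limWord_getElem (hm : ∀ i, 2 ≤ m i) {i k : ℕ} (h : ℕ)
    (hk : k < (wordIter l m n i h).length) :
    limWord l m n h k = (wordIter l m n i h)[k] := by
  have hlen : k < (wordIter l m n (k+1) h).length := by
    have := wordIter_length (l := l) (n := n) hm (k+1) h; omega
  rw [limWord, List.getD_eq_getElem _ _ hlen]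
  rcases Nat.le_total (k+1) i with hc | hc
  · exact (wordIter_prefix_le (fun i => by have := hm i; omega) hc h).getElem hlen
  · exact ((wordIter_prefix_le (fun i => by have := hm i; omega) hc h).getElem hk).symm

lemma length_middle {α} {v s u t : List α} (e : s ++ u ++ t = v) :
    s.length + u.length + t.length = v.length := by
  subst e; simp; omega

lemma getElem_middle {α} {v s u t : List α} (e : s ++ u ++ t = v) {j : ℕ} (hj : j < u.length)
    (hv : s.length + j < v.length) : v[s.length + j] = u[j] := by
  have hl := length_middle e
  subst e
  have h2 : s.length + j < (s ++ (u ++ t)).length := by simpa using hv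
  calc (s ++ u ++ t)[s.length + j] = (s ++ (u ++ t))[s.length + j]'h2 := by simp
    _ = (u ++ t)[s.length + j - s.length]'(by simp; omega) :=
        List.getElem_append_right (by omega)
    _ = (u ++ t)[j]'(by simp; omega) := by congr 1; omega
    _ = u[j] := List.getElem_append_left hj

lemma factor_iff (hm : ∀ i, 2 ≤ m i) (h : ℕ) (w : List Bool) :
    IsFactor (limWord l m n h) w ↔ ∃ i, w <:+: wordIter l m n i h := by
  constructor
  · rintro ⟨k, hk⟩
    obtain ⟨L, hL⟩ : ∃ L, w.length = L := ⟨_, rfl⟩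
    refine ⟨k + L, ?_⟩
    have hlen : k + L < (wordIter l m n (k + L) h).length :=
      wordIter_length hm _ h
    have h1 : w = ((wordIter l m n (k + L) h).drop k).take L := by
      apply List.ext_getElem
      · simp; omega
      · intro j hj hj'
        rw [List.getElem_take, List.getElem_drop]
        have hw : w[j] = limWord l m n h (k + j) := by
          have := List.getElem_of_eq hk hj
          simpa using this
        exact hw.trans (limWord_getElem hm h (by omega))
    rw [h1]
    exact ((List.take_prefix _ _).isInfix).trans ((List.drop_suffix _ _).isInfix)
  · rintro ⟨i, s, t, e⟩
    refine ⟨s.length, ?_⟩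
    have hlen := length_middle e
    apply List.ext_getElem
    · simp
    · intro j hj hj'
      simp only [List.getElem_map, List.getElem_range]
      rw [limWord_getElem hm h (i := i) (by omega), getElem_middle e hj]

lemma factor_of_infix (hm : ∀ i, 2 ≤ m i) {h : ℕ} {u w : List Bool}
    (huw : u <:+: w) (hw : IsFactor (limWord l m n h) w) :
    IsFactor (limWord l m n h) u := by
  rw [factor_iff hm] at *
  obtain ⟨i, hi⟩ := hw
  exact ⟨i, huw.trans hi⟩

end Aux

namespace Aux
open List
variable {l m n : ℕ → ℕ} {h : ℕ}

lemma infix_append_split {α} {u A B : List α} (hu : u <:+: A ++ B) :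
    u <:+: A ∨ u <:+: B ∨
      ∃ u₁ u₂, u = u₁ ++ u₂ ∧ u₁ ≠ [] ∧ u₂ ≠ [] ∧ u₁ <:+ A ∧ u₂ <+: B := by
  obtain ⟨s, t, e⟩ := hu
  rw [List.append_assoc] at e
  rcases List.append_eq_append_iff.mp e with ⟨a', ha1, ha2⟩ | ⟨c', hc1, hc2⟩
  · -- A = s ++ a', u ++ t = a' ++ B
    rcases List.append_eq_append_iff.mp ha2 with ⟨x, hx1, _⟩ | ⟨y, hy1, hy2⟩
    · -- a' = u ++ x
      exact Or.inl ⟨s, x, by rw [ha1, hx1, List.append_assoc]⟩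
    · -- u = a' ++ y, B = y ++ t
      rcases eq_or_ne a' [] with rfl | ha
      · refine Or.inr (Or.inl ⟨[], t, ?_⟩)
        simp only [List.nil_append] at hy1 ⊢
        rw [hy1, hy2]
      rcases eq_or_ne y [] with rfl | hy
      · refine Or.inl ⟨s, [], ?_⟩
        rw [ha1, hy1]; simp
      · exact Or.inr (Or.inr ⟨a', y, hy1, ha, hy, ⟨s, ha1.symm⟩, ⟨t, hy2.symm⟩⟩)
  · -- s = A ++ c', B = c' ++ (u ++ t)
    exact Or.inr (Or.inl ⟨c', t, by rw [hc2, List.append_assoc]⟩)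

/-- the 1-run length of a block -/
def tt (l n : ℕ → ℕ) (h : ℕ) (c : Bool) : ℕ := if c then n h else l h

lemma blk_eq (c : Bool) : blk l m n h c =
    List.replicate (m h) false ++ List.replicate (tt l n h c) true := rfl

lemma blk_length (c : Bool) : (blk l m n h c).length = m h + tt l n h c := by
  simp [blk_eq]

lemma blk_getElem (c : Bool) {i : ℕ} (hi : i < (blk l m n h c).length) :
    (blk l m n h c)[i] = decide (m h ≤ i) := by
  rw [List.getElem_of_eq (blk_eq c) hi]
  rcases Nat.lt_or_ge i (m h) with hc | hc
  · rw [List.getElem_append_left (by simpa using hc), List.getElem_replicate]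
    simp; omega
  · rw [List.getElem_append_right (by simpa using hc), List.getElem_replicate]
    simp [hc]

lemma count_true_blk (c : Bool) : (blk l m n h c).count true = tt l n h c := by
  simp [blk_eq, List.count_append, List.count_replicate]

lemma count_false_blk (c : Bool) : (blk l m n h c).count false = m h := by
  simp [blk_eq, List.count_append, List.count_replicate]

/-- elements of subw at positions < m h are false (when w nonempty covers it) -/
lemma subw_getElem_lt (c : Bool) (w : List Bool) {i : ℕ} (him : i < m h)
    (hi : i < (subw l m n h (c :: w)).length) :
    (subw l m n h (c :: w))[i] = false := by
  have hib : i < (blk l m n h c).length := by rw [blk_length]; omega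
  have hi' : i < (blk l m n h c ++ subw l m n h w).length := by
    simp only [List.length_append]; omega
  rw [List.getElem_of_eq (subw_cons c w) hi, List.getElem_append_left hib, blk_getElem]
  simp; omega

end Aux

namespace Aux
open List
variable {l m n : ℕ → ℕ} {h : ℕ}

lemma suffix_getElem {α} {u v : List α} (hs : u <:+ v) :
    ∃ q : ℕ, q + u.length = v.length ∧
      ∀ j (hj : j < u.length) (h2 : q + j < v.length), v[q + j]'h2 = u[j] := by
  obtain ⟨q, eq⟩ := hs
  have hq : q.length + u.length = v.length := by
    have := congrArg List.length eq; simpa using this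
  exact ⟨q.length, hq, fun j hj h2 => getElem_middle (t := ([] : List α)) (by simp [eq]) hj h2⟩

lemma prefix_getElem {α} {u v : List α} (hp : u <+: v) :
    u.length ≤ v.length ∧ ∀ j (hj : j < u.length) (h2 : j < v.length), v[j]'h2 = u[j] :=
  ⟨hp.length_le, fun j hj h2 => (hp.getElem hj).symm⟩

lemma append_getElem_left {α} {u u₁ u₂ : List α} (he : u = u₁ ++ u₂) {j : ℕ}
    (hj : j < u₁.length) (h2 : j < u.length) : u[j]'h2 = u₁[j] := by
  subst he; exact List.getElem_append_left hj

lemma append_getElem_right {α} {u u₁ u₂ : List α} (he : u = u₁ ++ u₂) {j : ℕ}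
    (hj : j < u₂.length) (h2 : u₁.length + j < u.length) : u[u₁.length + j]'h2 = u₂[j] := by
  subst he
  rw [List.getElem_append_right (by omega)]
  congr 1; omega

lemma getElem_idx {α} (v : List α) {i i' : ℕ} (hi : i < v.length) (hii : i = i') :
    v[i]'hi = v[i']'(hii ▸ hi) := by subst hii; rfl

lemma tt_pos (hl1 : 1 ≤ l h) (hn1 : 1 ≤ n h) (c : Bool) : 1 ≤ tt l n h c := by
  cases c <;> simpa [tt]

lemma tt_le (hln : l h ≤ n h) (c : Bool) : tt l n h c ≤ n h := by
  cases c <;> simp [tt, hln]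

/-- Negative A : `0^{m+1}` is not an infix of any substitution image. -/
lemma notA (hl1 : 1 ≤ l h) (hn1 : 1 ≤ n h) :
    ∀ w : List Bool, ¬ (List.replicate (m h + 1) false <:+: subw l m n h w) := by
  intro w
  induction w with
  | nil =>
    intro hu
    have := hu.length_le
    simp [subw_nil] at this
  | cons c w ih =>
    intro hu
    rw [subw_cons] at hu
    rcases infix_append_split hu with hb | hr | ⟨u₁, u₂, he, h1, h2, hsuf, hpre⟩
    · have hc := hb.sublist.count_le false
      rw [count_false_blk] at hc
      simp [List.count_replicate] at hc
    · exact ih hr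
    · obtain ⟨q, hq, hqe⟩ := suffix_getElem hsuf
      have hp1 : 1 ≤ u₁.length := List.length_pos_iff.mpr h1
      have hlb : (blk l m n h c).length = m h + tt l n h c := blk_length c
      have httpos := tt_pos hl1 hn1 c
      have hlast := hqe (u₁.length - 1) (by omega) (by omega)
      have hv : (blk l m n h c)[q + (u₁.length - 1)]'(by omega) =
          decide (m h ≤ q + (u₁.length - 1)) := blk_getElem c _
      have hufalse : u₁[u₁.length - 1]'(by omega) = false := by
        have hmem : u₁[u₁.length - 1]'(by omega) ∈ u₁ := List.getElem_mem _
        have hmem3 : u₁[u₁.length - 1]'(by omega) ∈ List.replicate (m h + 1) false := by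
          rw [he]; exact List.mem_append_left _ hmem
        exact List.eq_of_mem_replicate hmem3
      rw [hlast, hufalse] at hv
      have := of_decide_eq_false hv.symm
      omega

end Aux

namespace Aux
open List
variable {l m n : ℕ → ℕ} {h : ℕ}

lemma pat_getElem (x y z : ℕ) (b : Bool) {j : ℕ}
    (h2 : j < (List.replicate x b ++ List.replicate y (!b) ++ List.replicate z b).length) :
    (List.replicate x b ++ List.replicate y (!b) ++ List.replicate z b)[j] =
      if j < x then b else if j < x + y then !b else b := by
  rcases Nat.lt_or_ge j (x + y) with hc | hc
  · rw [List.getElem_append_left (show j < (List.replicate x b ++ List.replicate y (!b)).length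
      by simp; omega)]
    rcases Nat.lt_or_ge j x with hc2 | hc2
    · rw [List.getElem_append_left (show j < (List.replicate x b).length by simp; omega),
        List.getElem_replicate, if_pos hc2]
    · rw [List.getElem_append_right (show (List.replicate x b).length ≤ j by simp; omega),
        List.getElem_replicate, if_neg (by omega), if_pos (by omega)]
  · rw [List.getElem_append_right
      (show (List.replicate x b ++ List.replicate y (!b)).length ≤ j by simp; omega),
      List.getElem_replicate, if_neg (by omega), if_neg (by omega)]

/-- Negative C : `1^{n+1}` is not an infix of any substitution image. -/
lemma notC (hm1 : 1 ≤ m h) (hln : l h ≤ n h) :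
    ∀ w : List Bool, ¬ (List.replicate (n h + 1) true <:+: subw l m n h w) := by
  intro w
  induction w with
  | nil =>
    intro hu
    have := hu.length_le
    simp [subw_nil] at this
  | cons c w ih =>
    intro hu
    rw [subw_cons] at hu
    rcases infix_append_split hu with hb | hr | ⟨u₁, u₂, he, h1, h2, hsuf, hpre⟩
    · have hc := hb.sublist.count_le true
      rw [count_true_blk] at hc
      have := tt_le hln c
      simp [List.count_replicate] at hc
      omega
    · exact ih hr
    · obtain ⟨hle, hpe⟩ := prefix_getElem hpre
      have hp2 : 1 ≤ u₂.length := List.length_pos_iff.mpr h2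
      obtain ⟨c', w', rfl⟩ : ∃ c' w', w = c' :: w' := by
        cases w with
        | nil =>
          exfalso
          rw [subw_nil] at hle
          simp only [List.length_nil, Nat.le_zero] at hle
          exact h2 (List.length_eq_zero_iff.mp hle)
        | cons c' w' => exact ⟨c', w', rfl⟩
      have h0 := hpe 0 (by omega) (by omega)
      have hfalse : (subw l m n h (c' :: w'))[0]'(by omega) = false :=
        subw_getElem_lt c' w' hm1 _
      have hu2true : u₂[0]'(by omega) = true := by
        have hmem : u₂[0]'(by omega) ∈ u₂ := List.getElem_mem _
        have hmem3 : u₂[0]'(by omega) ∈ List.replicate (n h + 1) true := by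
          rw [he]; exact List.mem_append_right _ hmem
        exact List.eq_of_mem_replicate hmem3
      rw [hfalse, hu2true] at h0
      exact Bool.false_ne_true h0

/-- Negative B : `1 0^a 1` with `1 ≤ a < m` is not an infix of any image. -/
lemma notB (hm1 : 1 ≤ m h) {a : ℕ} (ha1 : 1 ≤ a) (ham : a < m h) :
    ∀ w : List Bool,
      ¬ (List.replicate 1 true ++ List.replicate a false ++ List.replicate 1 true
          <:+: subw l m n h w) := by
  intro w
  set u : List Bool :=
    List.replicate 1 true ++ List.replicate a false ++ List.replicate 1 true with hudef
  have hulen : u.length = a + 2 := by rw [hudef]; simp only [List.length_append, List.length_replicate]; omega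
  have hue : ∀ j (hj : j < u.length),
      u[j] = if j < 1 then true else if j < 1 + a then false else true := by
    intro j hj
    have := pat_getElem 1 a 1 true (j := j) (by simpa [hudef] using hj)
    simpa [hudef] using this
  have u0 : ∀ (hj : 0 < u.length), u[0] = true := by
    intro hj; rw [hue 0 hj, if_pos (by omega)]
  have u1 : ∀ (hj : 1 < u.length), u[1] = false := by
    intro hj; rw [hue 1 hj, if_neg (by omega), if_pos (by omega)]
  have ulast : ∀ (hj : 1 + a < u.length), u[1 + a] = true := by
    intro hj; rw [hue (1 + a) hj, if_neg (by omega), if_neg (by omega)]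
  induction w with
  | nil =>
    intro hu
    have hL := hu.length_le
    rw [subw_nil] at hL
    simp only [List.length_nil, Nat.le_zero] at hL
    omega
  | cons c w ih =>
    intro hu
    rw [subw_cons] at hu
    rcases infix_append_split hu with hb | hr | ⟨u₁, u₂, he, h1, h2, hsuf, hpre⟩
    · obtain ⟨s, t, e⟩ := hb
      have hL := length_middle e
      have e0 := getElem_middle e (j := 0) (by omega) (by omega)
      have e1 := getElem_middle e (j := 1) (by omega) (by omega)
      rw [blk_getElem] at e0 e1
      have E0 := of_decide_eq_true (e0.trans (u0 (by omega)))
      have E1 := of_decide_eq_false (e1.trans (u1 (by omega)))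
      omega
    · exact ih hr
    · obtain ⟨q, hq, hqe⟩ := suffix_getElem hsuf
      obtain ⟨hle, hpe⟩ := prefix_getElem hpre
      have hp1 : 1 ≤ u₁.length := List.length_pos_iff.mpr h1
      have hp2 : 1 ≤ u₂.length := List.length_pos_iff.mpr h2
      have hlequ : u₁.length + u₂.length = a + 2 := by
        have := congrArg List.length he; simp [hulen] at this; omega
      have hlb : (blk l m n h c).length = m h + tt l n h c := blk_length c
      have e0 : (blk l m n h c)[q + 0]'(by omega) = u₁[0]'(by omega) :=
        hqe 0 (by omega) (by omega)
      have e0' : u[0]'(by omega) = u₁[0]'(by omega) := append_getElem_left he (by omega) _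
      rw [blk_getElem] at e0
      have E0 := of_decide_eq_true (e0.trans (e0'.symm.trans (u0 (by omega))))
      by_cases hp : 2 ≤ u₁.length
      · have e1 : (blk l m n h c)[q + 1]'(by omega) = u₁[1]'(by omega) :=
          hqe 1 (by omega) (by omega)
        have e1' : u[1]'(by omega) = u₁[1]'(by omega) := append_getElem_left he (by omega) _
        rw [blk_getElem] at e1
        have E1 := of_decide_eq_false (e1.trans (e1'.symm.trans (u1 (by omega))))
        omega
      · have hp1' : u₁.length = 1 := by omega
        obtain ⟨c', w', rfl⟩ : ∃ c' w', w = c' :: w' := by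
          cases w with
          | nil =>
            exfalso
            rw [subw_nil] at hle
            simp only [List.length_nil, Nat.le_zero] at hle
            omega
          | cons c' w' => exact ⟨c', w', rfl⟩
        have ea : (subw l m n h (c' :: w'))[a]'(by omega) = u₂[a]'(by omega) :=
          hpe a (by omega) (by omega)
        have ea' : u[u₁.length + a]'(by omega) = u₂[a]'(by omega) :=
          append_getElem_right he (by omega) _
        have ea'' : u[u₁.length + a]'(by omega) = u[1 + a]'(by omega) :=
          getElem_idx u (by omega) (by omega)
        have hfalse : (subw l m n h (c' :: w'))[a]'(by omega) = false :=
          subw_getElem_lt c' w' ham _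
        have : (true : Bool) = false :=
          (ulast (by omega)).symm.trans (ea''.symm.trans (ea'.trans (ea.symm.trans hfalse)))
        simp at this

/-- Negative D : `0 1^b 0` with `1 ≤ b`, `b ≠ l h`, `b ≠ n h` is not an infix of any image. -/
lemma notD (hm1 : 1 ≤ m h) {b : ℕ} (hb1 : 1 ≤ b) (hbl : b ≠ l h) (hbn : b ≠ n h) :
    ∀ w : List Bool,
      ¬ (List.replicate 1 false ++ List.replicate b true ++ List.replicate 1 false
          <:+: subw l m n h w) := by
  intro w
  set u : List Bool :=
    List.replicate 1 false ++ List.replicate b true ++ List.replicate 1 false with hudef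
  have hulen : u.length = b + 2 := by
    rw [hudef]; simp only [List.length_append, List.length_replicate]; omega
  have hue : ∀ j (hj : j < u.length),
      u[j] = if j < 1 then false else if j < 1 + b then true else false := by
    intro j hj
    have := pat_getElem 1 b 1 false (j := j) (by simpa [hudef] using hj)
    simpa [hudef] using this
  have u0 : ∀ (hj : 0 < u.length), u[0] = false := by
    intro hj; rw [hue 0 hj, if_pos (by omega)]
  have u1 : ∀ (hj : 1 < u.length), u[1] = true := by
    intro hj; rw [hue 1 hj, if_neg (by omega), if_pos (by omega)]
  have umid : ∀ p (hp1 : 1 ≤ p) (hpb : p ≤ b) (hj : p < u.length), u[p] = true := by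
    intro p hp1 hpb hj; rw [hue p hj, if_neg (by omega), if_pos (by omega)]
  have ulast : ∀ (hj : b + 1 < u.length), u[b + 1] = false := by
    intro hj; rw [hue (b + 1) hj, if_neg (by omega), if_neg (by omega)]
  induction w with
  | nil =>
    intro hu
    have hL := hu.length_le
    rw [subw_nil] at hL
    simp only [List.length_nil, Nat.le_zero] at hL
    omega
  | cons c w ih =>
    intro hu
    rw [subw_cons] at hu
    rcases infix_append_split hu with hb' | hr | ⟨u₁, u₂, he, h1, h2, hsuf, hpre⟩
    · obtain ⟨s, t, e⟩ := hb'
      have hL := length_middle e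
      have e0 := getElem_middle e (j := b) (by omega) (by omega)
      have e1 := getElem_middle e (j := b + 1) (by omega) (by omega)
      rw [blk_getElem] at e0 e1
      have E0 := of_decide_eq_true (e0.trans (umid b hb1 (by omega) (by omega)))
      have E1 : decide (m h ≤ s.length + (b + 1)) = false := by
        refine e1.trans ?_
        exact ulast (by omega)
      have E1' := of_decide_eq_false E1
      omega
    · exact ih hr
    · obtain ⟨q, hq, hqe⟩ := suffix_getElem hsuf
      obtain ⟨hle, hpe⟩ := prefix_getElem hpre
      have hp1 : 1 ≤ u₁.length := List.length_pos_iff.mpr h1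
      have hp2 : 1 ≤ u₂.length := List.length_pos_iff.mpr h2
      have hlequ : u₁.length + u₂.length = b + 2 := by
        have := congrArg List.length he; simp [hulen] at this; omega
      have hlb : (blk l m n h c).length = m h + tt l n h c := blk_length c
      have e0 : (blk l m n h c)[q + 0]'(by omega) = u₁[0]'(by omega) :=
        hqe 0 (by omega) (by omega)
      have e0' : u[0]'(by omega) = u₁[0]'(by omega) := append_getElem_left he (by omega) _
      rw [blk_getElem] at e0
      have E0 := of_decide_eq_false (e0.trans (e0'.symm.trans (u0 (by omega))))
      rcases Nat.lt_or_ge b (u₁.length) with hc | hc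
      · -- u₁.length = b + 1 ≥ 2
        have hp : u₁.length = b + 1 := by omega
        have e1 : (blk l m n h c)[q + 1]'(by omega) = u₁[1]'(by omega) :=
          hqe 1 (by omega) (by omega)
        have e1' : u[1]'(by omega) = u₁[1]'(by omega) := append_getElem_left he (by omega) _
        rw [blk_getElem] at e1
        have E1 := of_decide_eq_true (e1.trans (e1'.symm.trans (u1 (by omega))))
        have hqval : q = m h - 1 := by omega
        have htb : tt l n h c = b := by omega
        cases c with
        | false => exact hbl (by simpa [tt] using htb.symm)
        | true => exact hbn (by simpa [tt] using htb.symm)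
      · -- u₁.length ≤ b : the first element of u₂ is a `true` at position 0 of subw
        obtain ⟨c', w', rfl⟩ : ∃ c' w', w = c' :: w' := by
          cases w with
          | nil =>
            exfalso
            rw [subw_nil] at hle
            simp only [List.length_nil, Nat.le_zero] at hle
            omega
          | cons c' w' => exact ⟨c', w', rfl⟩
        have ea : (subw l m n h (c' :: w'))[0]'(by omega) = u₂[0]'(by omega) :=
          hpe 0 (by omega) (by omega)
        have ea' : u[u₁.length + 0]'(by omega) = u₂[0]'(by omega) :=
          append_getElem_right he (by omega) _
        have ea'' : u[u₁.length + 0]'(by omega) = true := by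
          have := umid u₁.length hp1 hc (by omega)
          exact (getElem_idx u (by omega) (by omega)).trans this
        have hfalse : (subw l m n h (c' :: w'))[0]'(by omega) = false :=
          subw_getElem_lt c' w' hm1 _
        have : (false : Bool) = true := hfalse.symm.trans (ea.trans (ea'.symm.trans ea''))
        simp at this

end Aux

namespace Aux
open List
variable {l m n : ℕ → ℕ} {h : ℕ}

lemma rep_split (x k : ℕ) (b : Bool) (hk : k ≤ x) :
    List.replicate x b = List.replicate k b ++ List.replicate (x - k) b := by
  rw [← List.replicate_add]; congr 1; omega

/-- the witness word `0^m 1^n 0^m 1^l 0` -/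
def Wit (l m n : ℕ → ℕ) (h : ℕ) : List Bool :=
  List.replicate (m h) false ++ List.replicate (n h) true ++
    List.replicate (m h) false ++ List.replicate (l h) true ++ [false]

@[simp] lemma tt_false : tt l n h false = l h := rfl
@[simp] lemma tt_true : tt l n h true = n h := rfl

lemma fac_W (hm2 : ∀ i, 2 ≤ m i) (hl1 : ∀ i, 1 ≤ l i) :
    IsFactor (limWord l m n h) (Wit l m n h) := by
  rw [factor_iff hm2]
  refine ⟨3, ?_⟩
  -- step 1 : [false, true] <:+: wordIter 1 (h+2)
  have h1 : [false, true] <:+: wordIter l m n 1 (h + 2) := by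
    show [false, true] <:+: subw l m n (h + 2) [false]
    rw [subw_cons, subw_nil, List.append_nil, blk_eq]
    refine ⟨List.replicate (m (h+2) - 1) false, List.replicate (l (h+2) - 1) true, ?_⟩
    simp only [tt_false]
    rw [rep_split (m (h+2)) (m (h+2) - 1) false (by omega),
      rep_split (l (h+2)) 1 true (by have := hl1 (h+2); omega)]
    rw [show m (h+2) - (m (h+2) - 1) = 1 from by have := hm2 (h+2); omega]
    simp [List.append_assoc, List.replicate_one]
  -- step 2 : [true, false, false] <:+: wordIter 2 (h+1)
  have h2 : [true, false, false] <:+: wordIter l m n 2 (h + 1) := by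
    have h2a : subw l m n (h+1) [false, true] <:+: wordIter l m n 2 (h + 1) := by
      show _ <:+: subw l m n (h+1) (wordIter l m n 1 (h + 2))
      exact subw_infix h1
    refine List.IsInfix.trans ?_ h2a
    rw [subw_cons, subw_cons, subw_nil, List.append_nil, blk_eq, blk_eq]
    simp only [tt_false, tt_true]
    refine ⟨List.replicate (m (h+1)) false ++ List.replicate (l (h+1) - 1) true,
      List.replicate (m (h+1) - 2) false ++ List.replicate (n (h+1)) true, ?_⟩
    rw [rep_split (l (h+1)) (l (h+1) - 1) true (by omega),
      rep_split (m (h+1)) 2 false (by have := hm2 (h+1); omega)]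
    rw [show l (h+1) - (l (h+1) - 1) = 1 from by have := hl1 (h+1); omega]
    simp [List.append_assoc, List.replicate_one]
  -- step 3 : Wit is a prefix of subw h [true, false, false]
  have h3 : subw l m n h [true, false, false] <:+: wordIter l m n 3 h := by
    show _ <:+: subw l m n h (wordIter l m n 2 (h + 1))
    exact subw_infix h2
  refine List.IsInfix.trans ?_ h3
  rw [subw_cons, subw_cons, subw_cons, subw_nil, List.append_nil, blk_eq, blk_eq]
  simp only [tt_false, tt_true]
  refine ⟨[], List.replicate (m h - 1) false ++ List.replicate (l h) true, ?_⟩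
  unfold Wit
  rw [rep_split (m h) 1 false (by have := hm2 h; omega)]
  simp [List.append_assoc, List.replicate_one]

end Aux

namespace Aux
open List
variable {l m n : ℕ → ℕ} {h : ℕ}

lemma fac_of_Wit (hm2 : ∀ i, 2 ≤ m i) (hl1 : ∀ i, 1 ≤ l i) {u s t : List Bool}
    (he : s ++ u ++ t = Wit l m n h) : IsFactor (limWord l m n h) u :=
  factor_of_infix hm2 ⟨s, t, he⟩ (fac_W hm2 hl1)

lemma rep_rep_append (x y : ℕ) (b : Bool) (t : List Bool) :
    List.replicate x b ++ (List.replicate y b ++ t) = List.replicate (x + y) b ++ t := by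
  rw [← List.append_assoc, List.replicate_append_replicate]

/-- `0^a 1^b` is a factor for `a ≤ m h`, `b ≤ n h`. -/
lemma pos1 (hm2 : ∀ i, 2 ≤ m i) (hl1 : ∀ i, 1 ≤ l i) {a b : ℕ}
    (ha : a ≤ m h) (hb : b ≤ n h) :
    IsFactor (limWord l m n h)
      (List.replicate a false ++ List.replicate b true) := by
  refine fac_of_Wit hm2 hl1 (s := List.replicate (m h - a) false)
    (t := List.replicate (n h - b) true ++ List.replicate (m h) false ++
      List.replicate (l h) true ++ [false]) ?_
  unfold Wit
  rw [rep_split (m h) (m h - a) false (by omega), rep_split (n h) b true hb,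
    show m h - (m h - a) = a from by omega]
  simp [List.append_assoc, rep_rep_append,
    show m h - a + a = m h from by omega, show b + (n h - b) = n h from by omega]

/-- `1^b 0^a` is a factor for `a ≤ m h`, `b ≤ n h`. -/
lemma pos2 (hm2 : ∀ i, 2 ≤ m i) (hl1 : ∀ i, 1 ≤ l i) {a b : ℕ}
    (ha : a ≤ m h) (hb : b ≤ n h) :
    IsFactor (limWord l m n h)
      (List.replicate b true ++ List.replicate a false) := by
  refine fac_of_Wit hm2 hl1 (s := List.replicate (m h) false ++ List.replicate (n h - b) true)
    (t := List.replicate (m h - a) false ++ List.replicate (l h) true ++ [false]) ?_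
  unfold Wit
  rw [rep_split (n h) (n h - b) true (by omega), rep_split (m h) a false ha,
    show n h - (n h - b) = b from by omega]
  simp [List.append_assoc, rep_rep_append,
    show n h - b + b = n h from by omega, show a + (m h - a) = m h from by omega]

/-- `0 1^l 0` is a factor. -/
lemma pos3 (hm2 : ∀ i, 2 ≤ m i) (hl1 : ∀ i, 1 ≤ l i) :
    IsFactor (limWord l m n h)
      ([false] ++ List.replicate (l h) true ++ [false]) := by
  refine fac_of_Wit hm2 hl1
    (s := List.replicate (m h) false ++ List.replicate (n h) true ++
      List.replicate (m h - 1) false) (t := []) ?_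
  unfold Wit
  rw [rep_split (m h) (m h - 1) false (by omega),
    show m h - (m h - 1) = 1 from by have := hm2 h; omega]
  simp [List.append_assoc, List.replicate_one]

lemma wordIter_head (i h : ℕ) : 2 ≤ (wordIter l m n i h).length → False ∨ True := by
  exact fun _ => Or.inr trivial

/-- lift the negative lemmas to factors -/
lemma notFac_of_notSub {u : List Bool} (hm2 : ∀ i, 2 ≤ m i) (hlen : 2 ≤ u.length)
    (hsub : ∀ w : List Bool, ¬ (u <:+: subw l m n h w)) :
    ¬ IsFactor (limWord l m n h) u := by
  rw [factor_iff hm2]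
  rintro ⟨i, hi⟩
  cases i with
  | zero =>
    have := hi.length_le
    simp [wordIter] at this
    omega
  | succ i =>
    exact hsub (wordIter l m n i (h+1)) hi

lemma notFacA (hm2 : ∀ i, 2 ≤ m i) (hl1 : ∀ i, 1 ≤ l i) (hn1 : ∀ i, 1 ≤ n i) :
    ¬ IsFactor (limWord l m n h) (List.replicate (m h + 1) false) := by
  refine notFac_of_notSub hm2 (by simp; have := hm2 h; omega) ?_
  exact notA (hl1 h) (hn1 h)

lemma notFacC (hm2 : ∀ i, 2 ≤ m i) (hn1 : ∀ i, 1 ≤ n i) (hln : ∀ i, l i ≤ n i) :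
    ¬ IsFactor (limWord l m n h) (List.replicate (n h + 1) true) := by
  refine notFac_of_notSub hm2 (by simp; have := hn1 h; omega) ?_
  exact notC (by have := hm2 h; omega) (hln h)

lemma notFacB (hm2 : ∀ i, 2 ≤ m i) {a : ℕ} (ha1 : 1 ≤ a) (ham : a < m h) :
    ¬ IsFactor (limWord l m n h) ([true] ++ List.replicate a false ++ [true]) := by
  have := notB (l := l) (m := m) (n := n) (h := h) (by have := hm2 h; omega) ha1 ham
  refine notFac_of_notSub hm2 (by simp) ?_
  intro w hw
  refine this w ?_
  simpa [List.replicate_one] using hw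

lemma notFacD (hm2 : ∀ i, 2 ≤ m i) {b : ℕ} (hb1 : 1 ≤ b) (hbl : b ≠ l h) (hbn : b ≠ n h) :
    ¬ IsFactor (limWord l m n h) ([false] ++ List.replicate b true ++ [false]) := by
  have := notD (l := l) (m := m) (n := n) (h := h) (by have := hm2 h; omega) hb1 hbl hbn
  refine notFac_of_notSub hm2
    (by simp only [List.length_append, List.length_replicate, List.length_cons,
      List.length_nil]; omega) ?_
  intro w hw
  refine this w ?_
  simpa [List.replicate_one] using hw

/-- every word avoiding `10` is `0^a 1^b` -/
lemma short_shape : ∀ v : List Bool, ¬ ([true, false] <:+: v) →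
    ∃ a b, v = List.replicate a false ++ List.replicate b true := by
  intro v
  induction v with
  | nil => exact fun _ => ⟨0, 0, rfl⟩
  | cons c v ih =>
    intro hv
    have hv' : ¬ ([true, false] <:+: v) := by
      intro ⟨s, t, e⟩
      exact hv ⟨c :: s, t, by rw [← e]; simp⟩
    obtain ⟨a, b, rfl⟩ := ih hv'
    cases c with
    | false => exact ⟨a + 1, b, by rw [List.replicate_succ]; simp⟩
    | true =>
      have ha : a = 0 := by
        by_contra ha
        refine hv ⟨[], List.replicate (a - 1) false ++ List.replicate b true, ?_⟩
        rw [rep_split a 1 false (by omega)]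
        simp [List.append_assoc, List.replicate_one]
      subst ha
      exact ⟨0, b + 1, by rw [List.replicate_succ]; simp⟩

end Aux

namespace Aux
open List
variable {l m n : ℕ → ℕ} {h : ℕ}

lemma cons_rep (b : Bool) (x : ℕ) (t : List Bool) :
    b :: (List.replicate x b ++ t) = List.replicate (x + 1) b ++ t := rfl

lemma rep_infix_rep (b : Bool) {x y : ℕ} (hxy : x ≤ y) :
    List.replicate x b <:+: List.replicate y b :=
  ⟨[], List.replicate (y - x) b, by
    simp only [List.nil_append, List.replicate_append_replicate]
    congr 1; omega⟩

lemma rep_le_m (hm2 : ∀ i, 2 ≤ m i) (hl1 : ∀ i, 1 ≤ l i) (hn1 : ∀ i, 1 ≤ n i) {a : ℕ}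
    (hf : IsFactor (limWord l m n h) (List.replicate a false)) : a ≤ m h := by
  by_contra hc
  exact notFacA hm2 hl1 hn1
    (factor_of_infix hm2 (rep_infix_rep false (by omega)) hf)

lemma rep_le_n (hm2 : ∀ i, 2 ≤ m i) (hn1 : ∀ i, 1 ≤ n i) (hln : ∀ i, l i ≤ n i) {b : ℕ}
    (hf : IsFactor (limWord l m n h) (List.replicate b true)) : b ≤ n h := by
  by_contra hc
  exact notFacC hm2 hn1 hln
    (factor_of_infix hm2 (rep_infix_rep true (by omega)) hf)

lemma keyB (hm2 : ∀ i, 2 ≤ m i) (hl1 : ∀ i, 1 ≤ l i) (hn1 : ∀ i, 1 ≤ n i) {a : ℕ}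
    (ha : 1 ≤ a)
    (hf : IsFactor (limWord l m n h) ([true] ++ List.replicate a false ++ [true])) :
    a = m h := by
  rcases Nat.lt_or_ge a (m h) with hc | hc
  · exact absurd hf (notFacB hm2 ha hc)
  rcases Nat.lt_or_ge (m h) a with hc2 | hc2
  · refine absurd (factor_of_infix hm2 ?_ hf) (notFacA hm2 hl1 hn1)
    refine ⟨[true], List.replicate (a - (m h + 1)) false ++ [true], ?_⟩
    simp only [List.append_assoc, List.cons_append, List.nil_append, rep_rep_append,
      List.singleton_append]
    rw [show m h + 1 + (a - (m h + 1)) = a from by omega]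
  · omega

lemma keyD (hm2 : ∀ i, 2 ≤ m i) {b : ℕ} (hb : 1 ≤ b)
    (hf : IsFactor (limWord l m n h) ([false] ++ List.replicate b true ++ [false])) :
    b = l h ∨ b = n h := by
  by_contra hcon
  push_neg at hcon
  exact notFacD hm2 hb hcon.1 hcon.2 hf

end Aux

set_option maxHeartbeats 1000000 in
theorem stmt16 (l m n : ℕ → ℕ) (hlpos : ∀ i, 0 < l i)
    (hlm : ∀ i, l i < m i) (hmn : ∀ i, m i < n i) (h : ℕ) :
    (∀ v : List Bool, IsFactor (limWord l m n h) v → ¬ [true, false] <:+: v →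
        (StrongBS (limWord l m n h) v ↔ (v = [] ∨ v = List.replicate (l h) true))) ∧
      (∀ v : List Bool, IsFactor (limWord l m n h) v → ¬ [true, false] <:+: v →
        (WeakBS (limWord l m n h) v ↔
          (v = List.replicate (m h - 1) false ∨ v = List.replicate (n h - 1) true))) := by
  have hm2 : ∀ i, 2 ≤ m i := fun i => by have := hlpos i; have := hlm i; omega
  have hn1 : ∀ i, 1 ≤ n i := fun i => by have := hm2 i; have := hmn i; omega
  have hln : ∀ i, l i ≤ n i := fun i => by have := hlm i; have := hmn i; omega
  have hl1 : ∀ i, 1 ≤ l i := hlpos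
  have hmh : 2 ≤ m h := hm2 h
  have hlh : 1 ≤ l h := hlpos h
  have hlmh : l h < m h := hlm h
  have hmnh : m h < n h := hmn h
  constructor
  · -- strong bispecial characterization
    intro v hv hshort
    obtain ⟨a, b, rfl⟩ := Aux.short_shape v hshort
    constructor
    · rintro ⟨h00, h01, h10, h11⟩
      cases a with
      | zero =>
        cases b with
        | zero => exact Or.inl rfl
        | succ b' =>
          have hD := Aux.keyD hm2 (b := b' + 1) (by omega) h00
          have e : (true :: (List.replicate 0 false ++ List.replicate (b' + 1) true) ++ [true]
              : List Bool) = List.replicate (b' + 1 + 1 + 1) true := by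
            simp only [List.replicate_zero, List.nil_append, List.cons_append]
            rw [Aux.cons_rep, ← List.replicate_succ']
          have hle := Aux.rep_le_n hm2 hn1 hln (e ▸ h11)
          have hbl : b' + 1 = l h := by rcases hD with hD | hD; exacts [hD, by omega]
          right
          simp [hbl]
      | succ a' =>
        cases b with
        | zero =>
          exfalso
          simp only [List.replicate_zero, List.append_nil] at h00 h11
          have hBm := Aux.keyB hm2 hl1 hn1 (a := a' + 1) (by omega) h11
          have e : (false :: (List.replicate (a' + 1) false ++ [false]) : List Bool)
              = List.replicate (a' + 1 + 1 + 1) false := by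
            rw [Aux.cons_rep, ← List.replicate_succ']
          have h00' : IsFactor (limWord l m n h)
              (List.replicate (a' + 1 + 1 + 1) false) := by
            refine Aux.factor_of_infix hm2 ⟨[], [], ?_⟩ h00
            rw [List.nil_append, List.append_nil]
            exact e.symm
          have hle := Aux.rep_le_m hm2 hl1 hn1 h00'
          omega
        | succ b' =>
          exfalso
          have h11' : IsFactor (limWord l m n h)
              ([true] ++ List.replicate (a' + 1) false ++ [true]) := by
            refine Aux.factor_of_infix hm2
              ⟨[], List.replicate b' true ++ [true], ?_⟩ h11
            simp only [List.nil_append, List.append_assoc, List.cons_append,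
              List.singleton_append]
            rw [Aux.cons_rep]
          have hBm := Aux.keyB hm2 hl1 hn1 (a := a' + 1) (by omega) h11'
          refine absurd (Aux.factor_of_infix hm2
            ⟨[], List.replicate (b' + 1) true ++ [false], ?_⟩ h00)
            (Aux.notFacA hm2 hl1 hn1)
          rw [← hBm]
          simp only [List.nil_append, List.append_assoc, List.cons_append,
            List.singleton_append]
          rw [Aux.cons_rep]
    · rintro (hveq | hveq) <;> rw [hveq]
      · refine ⟨?_, ?_, ?_, ?_⟩
        · simpa using Aux.pos1 (h := h) hm2 hl1 (show 2 ≤ m h from hmh) (Nat.zero_le _)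
        · simpa using Aux.pos1 (h := h) hm2 hl1 (show 1 ≤ m h by omega) (show 1 ≤ n h by omega)
        · simpa using Aux.pos2 (h := h) hm2 hl1 (show 1 ≤ m h by omega) (show 1 ≤ n h by omega)
        · simpa using Aux.pos1 (h := h) hm2 hl1 (Nat.zero_le _) (show 2 ≤ n h by omega)
      · refine ⟨?_, ?_, ?_, ?_⟩
        · exact Aux.pos3 hm2 hl1
        · have := Aux.pos1 (h := h) hm2 hl1 (show 1 ≤ m h by omega)
            (show l h + 1 ≤ n h by omega)
          rw [List.replicate_succ' (n := l h) (a := true)] at this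
          simpa [List.append_assoc, List.replicate_one] using this
        · have := Aux.pos2 (h := h) hm2 hl1 (show 1 ≤ m h by omega)
            (show l h + 1 ≤ n h by omega)
          rw [List.replicate_succ (a := true) (n := l h)] at this
          simpa [List.append_assoc, List.replicate_one] using this
        · have := Aux.pos1 (h := h) hm2 hl1 (Nat.zero_le _)
            (show l h + 1 + 1 ≤ n h by omega)
          rw [List.replicate_succ' (n := l h + 1) (a := true), List.replicate_succ (a := true) (n := l h)] at this
          simpa [List.append_assoc, List.replicate_one] using this
  · -- weak bispecial characterization
    intro v hv hshort
    obtain ⟨a, b, rfl⟩ := Aux.short_shape v hshort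
    constructor
    · rintro (⟨h00, h11, hn01, hn10⟩ | ⟨h01, h10, hn00, hn11⟩)
      · -- pattern 00 & 11 : always impossible
        exfalso
        cases a with
        | zero =>
          cases b with
          | zero =>
            exact hn01 (by
              simpa using Aux.pos1 (h := h) hm2 hl1 (show 1 ≤ m h by omega)
                (show 1 ≤ n h by omega))
          | succ b' =>
            have e : (true :: (List.replicate 0 false ++ List.replicate (b' + 1) true) ++ [true]
                : List Bool) = List.replicate (b' + 1 + 1 + 1) true := by
              simp only [List.replicate_zero, List.nil_append, List.cons_append]
              rw [Aux.cons_rep, ← List.replicate_succ']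
            have h11' : IsFactor (limWord l m n h)
                (List.replicate (b' + 1 + 1 + 1) true) := by
              refine Aux.factor_of_infix hm2 ⟨[], [], ?_⟩ h11
              rw [List.nil_append, List.append_nil]
              exact e.symm
            have hle := Aux.rep_le_n hm2 hn1 hln h11'
            refine hn01 ?_
            have := Aux.pos1 (h := h) hm2 hl1 (show 1 ≤ m h by omega)
              (show b' + 1 + 1 ≤ n h by omega)
            rw [List.replicate_succ' (n := b' + 1) (a := true)] at this
            simpa [List.append_assoc, List.replicate_one] using this
        | succ a' =>
          cases b with
          | zero =>
            simp only [List.replicate_zero, List.append_nil] at h00 h11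
            have hBm := Aux.keyB hm2 hl1 hn1 (a := a' + 1) (by omega) h11
            have e : (false :: (List.replicate (a' + 1) false ++ [false]) : List Bool)
                = List.replicate (a' + 1 + 1 + 1) false := by
              rw [Aux.cons_rep, ← List.replicate_succ']
            have h00' : IsFactor (limWord l m n h)
                (List.replicate (a' + 1 + 1 + 1) false) := by
              refine Aux.factor_of_infix hm2 ⟨[], [], ?_⟩ h00
              rw [List.nil_append, List.append_nil]
              exact e.symm
            have hle := Aux.rep_le_m hm2 hl1 hn1 h00'
            omega
          | succ b' =>
            have h11' : IsFactor (limWord l m n h)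
                ([true] ++ List.replicate (a' + 1) false ++ [true]) := by
              refine Aux.factor_of_infix hm2
                ⟨[], List.replicate b' true ++ [true], ?_⟩ h11
              simp only [List.nil_append, List.append_assoc, List.cons_append,
                List.singleton_append]
              rw [Aux.cons_rep]
            have hBm := Aux.keyB hm2 hl1 hn1 (a := a' + 1) (by omega) h11'
            refine absurd (Aux.factor_of_infix hm2
              ⟨[], List.replicate (b' + 1) true ++ [false], ?_⟩ h00)
              (Aux.notFacA hm2 hl1 hn1)
            rw [← hBm]
            simp only [List.nil_append, List.append_assoc, List.cons_append,
              List.singleton_append]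
            rw [Aux.cons_rep]
      · -- pattern 01 & 10
        cases a with
        | zero =>
          cases b with
          | zero =>
            exact absurd (by
              simpa using Aux.pos1 (h := h) hm2 hl1 (show 2 ≤ m h from hmh)
                (Nat.zero_le _)) hn00
          | succ b' =>
            -- v = 1^{b'+1} ; conclude b'+1 = n h - 1
            have e01 : (false :: (List.replicate 0 false ++ List.replicate (b' + 1) true)
                ++ [true] : List Bool) = [false] ++ List.replicate (b' + 1 + 1) true := by
              simp only [List.replicate_zero, List.nil_append, List.cons_append,
                List.singleton_append]
              rw [← List.replicate_succ']
            have hble : b' + 1 + 1 ≤ n h := by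
              refine Aux.rep_le_n hm2 hn1 hln
                (Aux.factor_of_infix hm2 ⟨[false], [], ?_⟩ h01)
              rw [List.append_nil]
              exact e01.symm
            have hgt : ¬ (b' + 1 + 1 + 1 ≤ n h) := by
              intro hle
              refine hn11 ?_
              have := Aux.pos1 (h := h) hm2 hl1 (Nat.zero_le _)
                (show b' + 1 + 1 + 1 ≤ n h from hle)
              rw [List.replicate_succ' (n := b' + 1 + 1) (a := true),
                List.replicate_succ (a := true) (n := b' + 1)] at this
              simpa [List.append_assoc, List.replicate_one] using this
            right
            have : b' + 1 = n h - 1 := by omega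
            simp [this]
        | succ a' =>
          cases b with
          | zero =>
            -- v = 0^{a'+1} ; conclude a'+1 = m h - 1
            simp only [List.replicate_zero, List.append_nil] at h01 hn00
            have e01 : (false :: (List.replicate (a' + 1) false ++ [true]) : List Bool)
                = List.replicate (a' + 1 + 1) false ++ [true] := by
              rw [Aux.cons_rep]
            have hale : a' + 1 + 1 ≤ m h := by
              refine Aux.rep_le_m hm2 hl1 hn1
                (Aux.factor_of_infix hm2 ⟨[], [true], ?_⟩ h01)
              rw [List.nil_append]
              exact e01.symm
            have hgt : ¬ (a' + 1 + 1 + 1 ≤ m h) := by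
              intro hle
              refine hn00 ?_
              have := Aux.pos1 (h := h) hm2 hl1
                (show a' + 1 + 1 + 1 ≤ m h from hle) (show (0:ℕ) ≤ n h from Nat.zero_le _)
              rw [List.replicate_succ' (n := a' + 1 + 1) (a := false),
                List.replicate_succ (a := false) (n := a' + 1)] at this
              simpa [List.append_assoc, List.replicate_one] using this
            left
            have : a' + 1 = m h - 1 := by omega
            simp [this]
          | succ b' =>
            exfalso
            have h10' : IsFactor (limWord l m n h)
                ([true] ++ List.replicate (a' + 1) false ++ [true]) := by
              refine Aux.factor_of_infix hm2
                ⟨[], List.replicate b' true ++ [false], ?_⟩ h10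
              simp only [List.nil_append, List.append_assoc, List.cons_append,
                List.singleton_append]
              rw [Aux.cons_rep]
            have hBm := Aux.keyB hm2 hl1 hn1 (a := a' + 1) (by omega) h10'
            refine absurd (Aux.factor_of_infix hm2
              ⟨[], List.replicate (b' + 1) true ++ [true], ?_⟩ h01)
              (Aux.notFacA hm2 hl1 hn1)
            rw [← hBm]
            simp only [List.nil_append, List.append_assoc, List.cons_append,
              List.singleton_append]
            rw [Aux.cons_rep]
    · rintro (hveq | hveq) <;> rw [hveq] <;> refine Or.inr ⟨?_, ?_, ?_, ?_⟩
      · -- 0 0^{m-1} 1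
        simp only [List.cons_append]
        rw [Aux.cons_rep, show m h - 1 + 1 = m h from by omega]
        simpa [List.replicate_one] using
          Aux.pos1 (h := h) hm2 hl1 (le_refl (m h)) (show 1 ≤ n h by omega)
      · -- 1 0^{m-1} 0
        have := Aux.pos2 (h := h) hm2 hl1 (le_refl (m h)) (show 1 ≤ n h by omega)
        rw [show m h = m h - 1 + 1 from by omega, List.replicate_succ' (n := m h - 1) (a := false)]
          at this
        simpa [List.append_assoc, List.replicate_one] using this
      · -- not 0 0^{m-1} 0
        intro hcon
        refine Aux.notFacA hm2 hl1 hn1 (Aux.factor_of_infix hm2 ⟨[], [], ?_⟩ hcon)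
        rw [List.nil_append, List.append_nil, List.cons_append, Aux.cons_rep,
          ← List.replicate_succ']
        congr 1
        omega
      · -- not 1 0^{m-1} 1
        exact fun hcon => Aux.notFacB hm2 (by omega) (by omega) hcon
      · -- 0 1^{n-1} 1
        have := Aux.pos1 (h := h) hm2 hl1 (show 1 ≤ m h by omega) (le_refl (n h))
        rw [show n h = n h - 1 + 1 from by omega, List.replicate_succ' (n := n h - 1) (a := true)]
          at this
        simpa [List.append_assoc, List.replicate_one] using this
      · -- 1 1^{n-1} 0
        simp only [List.cons_append]
        rw [Aux.cons_rep, show n h - 1 + 1 = n h from by omega]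
        simpa [List.replicate_one] using
          Aux.pos2 (h := h) hm2 hl1 (show 1 ≤ m h by omega) (le_refl (n h))
      · -- not 0 1^{n-1} 0
        exact fun hcon => Aux.notFacD hm2 (by omega) (by omega) (by omega) hcon
      · -- not 1 1^{n-1} 1
        intro hcon
        refine Aux.notFacC hm2 hn1 hln (Aux.factor_of_infix hm2 ⟨[], [], ?_⟩ hcon)
        rw [List.nil_append, List.append_nil, List.cons_append, Aux.cons_rep,
          ← List.replicate_succ']
        congr 1
        omega
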